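/- Suppose φ satisfies Assumption (A) with s > d, fix z > 0, β > 0, a bounded measurable Λ ⊂ ℝ^d and a finite configuration η ⊂ Λ, and define R^Λ(η;z,β,a) = (z^{|η|}/Z_Λ(z,β)) · Σ_{n≥0} (z^n/n!) ∫_{Λ^n} exp(−β U(η∪{y₁,…,y_n})) · (1 − χ₋^a(η∪{y₁,…,y_n})) dy₁⋯dy_n (the part of the correlation integral coming from configurations with at least one cube of Δ̄_a containing two or more points). Then lim_{a→0} R^Λ(η;z,β,a) = 0. -/

import Mathlib

open MeasureTheory Filter Topology Set
open scoped BigOperators ENNReal NNReal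

noncomputable section

attribute [local instance] Classical.propDecidable

/-- Points of `ℝ^d` (Euclidean space). -/
abbrev Pt (d : ℕ) : Type := EuclideanSpace ℝ (Fin d)

/-- The index `r ∈ ℤ^d` of the cube `Δ_a(r)` of the partition `Δ̄_a` containing `x`:
for `a > 0` we have `cubeIdx d a x = r ↔ ∀ i, a*(r i - 1/2) ≤ x i ∧ x i < a*(r i + 1/2)`. -/
def cubeIdx (d : ℕ) (a : ℝ) (x : Pt d) : Fin d → ℤ := fun i => ⌊x i / a + 1/2⌋

/-- `φ⁺(t) = max {0, φ(t)}`. -/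
def phiPlus (φ : ℝ → ℝ) (t : ℝ) : ℝ := max (φ t) 0

/-- `φ⁻(t) = -min {0, φ(t)}`. -/
def phiMinus (φ : ℝ → ℝ) (t : ℝ) : ℝ := max (-(φ t)) 0

/-- Energy `U(γ) = Σ_{{x,y}⊂γ} φ(|x-y|)` of a finite configuration. -/
def energy (d : ℕ) (φ : ℝ → ℝ) (γ : Finset (Pt d)) : ℝ :=
  (∑ p ∈ γ.offDiag, φ (dist p.1 p.2)) / 2

/-- Interaction energy `W(η;γ) = Σ_{x∈η} Σ_{y∈γ} φ(|x-y|)`. -/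
def interW (d : ℕ) (φ : ℝ → ℝ) (η γ : Finset (Pt d)) : ℝ :=
  ∑ x ∈ η, ∑ y ∈ γ, φ (dist x y)

/-- Number of points of `γ` in the cube `Δ_a(r)`, i.e. `|γ_Δ|`. -/
def cubeCount (d : ℕ) (a : ℝ) (γ : Finset (Pt d)) (r : Fin d → ℤ) : ℕ :=
  (γ.filter fun x => cubeIdx d a x = r).card

/-- `Σ_{Δ ∈ Δ̄_a : |γ_Δ| ≥ 2} |γ_Δ|²`. -/
def densSum (d : ℕ) (a : ℝ) (γ : Finset (Pt d)) : ℝ :=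
  ∑ r ∈ γ.image (cubeIdx d a),
    if 2 ≤ cubeCount d a γ r then (cubeCount d a γ r : ℝ) ^ 2 else 0

/-- `b(a) = inf {φ⁺(|x-y|) : x ≠ y lie in one common cube of Δ̄_a}`. -/
def bVal (d : ℕ) (φ : ℝ → ℝ) (a : ℝ) : ℝ :=
  sInf {t : ℝ | ∃ x y : Pt d, x ≠ y ∧ cubeIdx d a x = cubeIdx d a y ∧ t = phiPlus φ (dist x y)}

/-- `v₀(a) = Σ_{Δ'∈Δ̄_a} sup_{x∈Δ₀} sup_{y∈Δ'} φ⁻(|x-y|)` (valued in `ℝ≥0∞`). -/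
def v0E (d : ℕ) (φ : ℝ → ℝ) (a : ℝ) : ℝ≥0∞ :=
  ∑' r : Fin d → ℤ,
    ⨆ x ∈ {x : Pt d | cubeIdx d a x = 0}, ⨆ y ∈ {y : Pt d | cubeIdx d a y = r},
      ENNReal.ofReal (phiMinus φ (dist x y))

/-- Real value of `v₀(a)`. -/
def v0Val (d : ℕ) (φ : ℝ → ℝ) (a : ℝ) : ℝ := (v0E d φ a).toReal

/-- Assumption (A) on the interaction potential. -/
structure AssumptionA (d : ℕ) (φ : ℝ → ℝ) (r₀ R φ₀ φ₁ ε₀ s : ℝ) : Prop where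
  cont : ContinuousOn φ (Set.Ioi (0 : ℝ))
  r0_pos : 0 < r₀
  R_gt : r₀ < R
  phi0_pos : 0 < φ₀
  phi1_pos : 0 < φ₁
  eps0_pos : 0 < ε₀
  s_ge : (d : ℝ) ≤ s
  decay : ∀ t : ℝ, R ≤ t → -(φ₁ / t ^ ((d : ℝ) + ε₀)) ≤ φ t
  core : ∀ t : ℝ, 0 < t → t ≤ r₀ → φ₀ / t ^ s ≤ φ t

/-- `χ₋^a(γ) = 1` iff no cube of `Δ̄_a` contains two or more points of `γ`. -/
def chiM (d : ℕ) (a : ℝ) (γ : Finset (Pt d)) : ℝ :=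
  if ∀ x ∈ γ, ∀ y ∈ γ, cubeIdx d a x = cubeIdx d a y → x = y then 1 else 0

/-- The finite configuration `{y₁,…,y_n}`. -/
def confOf {d n : ℕ} (y : Fin n → Pt d) : Finset (Pt d) := Finset.image y Finset.univ

/-- Weighted grand partition function `1 + Σ_{n≥1} (zⁿ/n!) ∫_{Λⁿ} e^{-βU({x₁,…,xₙ})} w({x₁,…,xₙ})`. -/
def ZW (d : ℕ) (φ : ℝ → ℝ) (z β : ℝ) (Λ : Set (Pt d)) (w : Finset (Pt d) → ℝ) : ℝ :=
  1 + ∑' n : ℕ, (z ^ (n + 1) / (n + 1).factorial) *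
    ∫ y in {y : Fin (n + 1) → Pt d | ∀ i, y i ∈ Λ},
      Real.exp (-β * energy d φ (confOf y)) * w (confOf y)

/-- Grand partition function `Z_Λ(z,β)`. -/
def ZΛ (d : ℕ) (φ : ℝ → ℝ) (z β : ℝ) (Λ : Set (Pt d)) : ℝ := ZW d φ z β Λ fun _ => 1

/-- Dilute (quasi-lattice approximated) partition function `Z_Λ^{(-)}(z,β,a)`. -/
def ZΛm (d : ℕ) (φ : ℝ → ℝ) (z β a : ℝ) (Λ : Set (Pt d)) : ℝ := ZW d φ z β Λ (chiM d a)

/-- `Σ_{n≥0} (zⁿ/n!) ∫_{Λⁿ} e^{-βU(η∪{y₁,…,y_n})} w(η∪{y₁,…,y_n})`. -/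
def corrInt (d : ℕ) (φ : ℝ → ℝ) (z β : ℝ) (Λ : Set (Pt d)) (η : Finset (Pt d))
    (w : Finset (Pt d) → ℝ) : ℝ :=
  Real.exp (-β * energy d φ η) * w η +
  ∑' n : ℕ, (z ^ (n + 1) / (n + 1).factorial) *
    ∫ y in {y : Fin (n + 1) → Pt d | ∀ i, y i ∈ Λ},
      Real.exp (-β * energy d φ (η ∪ confOf y)) * w (η ∪ confOf y)

/-- Finite-volume correlation function `ρ_Λ(η;z,β)`. -/
def rhoΛ (d : ℕ) (φ : ℝ → ℝ) (z β : ℝ) (Λ : Set (Pt d)) (η : Finset (Pt d)) : ℝ :=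
  z ^ η.card / ZΛ d φ z β Λ * corrInt d φ z β Λ η fun _ => 1

/-- Approximated correlation function `ρ_Λ^{(-)}(η;z,β,a)`. -/
def rhoΛm (d : ℕ) (φ : ℝ → ℝ) (z β a : ℝ) (Λ : Set (Pt d)) (η : Finset (Pt d)) : ℝ :=
  z ^ η.card / ZΛm d φ z β a Λ * corrInt d φ z β Λ η (chiM d a)

/-- `ε₁(a)`. -/
def eps1 (d : ℕ) (φ : ℝ → ℝ) (z β a : ℝ) : ℝ :=
  1/2 * z^2 * a^(2*d) * Real.exp (-β * (bVal d φ a - 5 * v0Val d φ a)) *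
    Real.exp (z * a^d * Real.exp (-β * (bVal d φ a - 3 * v0Val d φ a)))

/-- The cube `[-L/2, L/2)^d`. -/
def boxHalf (d : ℕ) (L : ℝ) : Set (Pt d) := {x | ∀ i, -(L/2) ≤ x i ∧ x i < L/2}

/-- The cube `Λ_l = [-a(l+1/2), a(l+1/2))^d`, a union of cubes of `Δ̄_a`. -/
def boxLat (d : ℕ) (a : ℝ) (l : ℕ) : Set (Pt d) :=
  {x | ∀ i, -(a*(l+1/2)) ≤ x i ∧ x i < a*(l+1/2)}

namespace RemAux

open MeasureTheory Filter Set

/-- Measurable Borel extension of `φ` off `(0,∞)`. -/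
def phiE (φ : ℝ → ℝ) (t : ℝ) : ℝ := if 0 < t then φ t else 0

lemma phiE_of_pos (φ : ℝ → ℝ) {t : ℝ} (ht : 0 < t) : phiE φ t = φ t := if_pos ht

lemma measurable_phiE {φ : ℝ → ℝ} (h : ContinuousOn φ (Set.Ioi 0)) :
    Measurable (phiE φ) := by
  apply measurable_of_isOpen
  intro U hU
  have h1 : MeasurableSet (Set.Ioi (0:ℝ) ∩ φ ⁻¹' U) :=
    (h.isOpen_inter_preimage isOpen_Ioi hU).measurableSet
  have he : phiE φ ⁻¹' U = (Set.Ioi 0 ∩ φ ⁻¹' U) ∪ (Set.Iic 0 ∩ {t : ℝ | (0:ℝ) ∈ U}) := by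
    ext t
    by_cases ht : 0 < t
    · simp [phiE, ht, not_le.mpr ht]
    · simp [phiE, ht, le_of_not_gt ht]
  rw [he]
  exact h1.union (measurableSet_Iic.inter (MeasurableSet.const _))

lemma abs_lt_one_of_floor_eq {u v : ℝ} (h : ⌊u⌋ = ⌊v⌋) : |u - v| < 1 := by
  rw [abs_sub_lt_iff]
  constructor
  · have h1 := Int.lt_floor_add_one u
    have h2 := Int.floor_le v
    rw [h] at h1
    linarith
  · have h1 := Int.lt_floor_add_one v
    have h2 := Int.floor_le u
    rw [h] at h2
    linarith

/-- For a fixed finite configuration, for all small `a > 0` no cube contains two points. -/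
lemma chiM_eventually_one (d : ℕ) (γ : Finset (Pt d)) :
    ∀ᶠ a in 𝓝[>] (0:ℝ), chiM d a γ = 1 := by
  rcases Finset.eq_empty_or_nonempty γ.offDiag with he | hne
  · refine Filter.Eventually.of_forall fun a => ?_
    rw [chiM, if_pos]
    intro x hx y hy _
    by_contra hxy
    have : (x, y) ∈ γ.offDiag := Finset.mem_offDiag.2 ⟨hx, hy, hxy⟩
    simp [he] at this
  · have hFd : Nonempty (Fin d) := by
      by_contra h
      obtain ⟨p, hp⟩ := hne
      have hmem := Finset.mem_offDiag.1 hp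
      exact hmem.2.2 (PiLp.ext fun i => ((not_nonempty_iff.1 h).elim i))
    set g : Pt d × Pt d → ℝ :=
      fun p => Finset.univ.sup' Finset.univ_nonempty (fun i => |p.1 i - p.2 i|) with hg
    have hgpos : ∀ p ∈ γ.offDiag, 0 < g p := by
      intro p hp
      obtain ⟨_, _, h3⟩ := Finset.mem_offDiag.1 hp
      have : ∃ i, p.1 i ≠ p.2 i := by
        by_contra h
        push_neg at h
        exact h3 (PiLp.ext h)
      obtain ⟨i, hi⟩ := this
      exact lt_of_lt_of_le (abs_pos.2 (sub_ne_zero.2 hi))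
        (Finset.le_sup' (fun i => |p.1 i - p.2 i|) (Finset.mem_univ i))
    have hm : 0 < γ.offDiag.inf' hne g := by
      rw [Finset.lt_inf'_iff]
      exact hgpos
    filter_upwards [Ioo_mem_nhdsGT hm] with a ha
    rw [chiM, if_pos]
    intro x hx y hy hc
    by_contra hxy
    have hmem : (x, y) ∈ γ.offDiag := Finset.mem_offDiag.2 ⟨hx, hy, hxy⟩
    have hgm : γ.offDiag.inf' hne g ≤ g (x, y) := Finset.inf'_le _ hmem
    obtain ⟨i, _, hig⟩ :=
      Finset.exists_mem_eq_sup' (s := (Finset.univ : Finset (Fin d)))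
        Finset.univ_nonempty (fun i => |x i - y i|)
    have hfl : ⌊x i / a + 1/2⌋ = ⌊y i / a + 1/2⌋ := by
      have := congrFun hc i
      simpa [cubeIdx] using this
    have habs := abs_lt_one_of_floor_eq hfl
    have hlt : |x i - y i| < a := by
      have hr : x i / a + 1/2 - (y i / a + 1/2) = (x i - y i) / a := by ring
      rw [hr, abs_div, abs_of_pos ha.1, div_lt_one ha.1] at habs
      exact habs
    have : g (x, y) < a := by
      rw [hg]
      simp only []
      rw [hig]
      exact hlt
    exact absurd (lt_of_lt_of_le ha.2 hgm) (not_lt.2 this.le)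

lemma haar_pi (d m : ℕ) : (volume : Measure (Fin m → Pt d)).IsAddHaarMeasure := by constructor

lemma pt_ne_zero_of_one_le {d : ℕ} (hd : 1 ≤ d) :
    (EuclideanSpace.single (⟨0, hd⟩ : Fin d) (1:ℝ)) ≠ 0 := by
  intro h
  have := congrArg (fun v : Pt d => v (⟨0, hd⟩ : Fin d)) h
  simp [EuclideanSpace.single_apply] at this

lemma null_eq_coord (d m : ℕ) (hd : 1 ≤ d) (i j : Fin m) (hij : i ≠ j) :
    volume {y : Fin m → Pt d | y i = y j} = 0 := by
  haveI := haar_pi d m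
  have hset : {y : Fin m → Pt d | y i = y j}
      = (LinearMap.ker ((LinearMap.proj i : (Fin m → Pt d) →ₗ[ℝ] Pt d) - LinearMap.proj j)
          : Set (Fin m → Pt d)) := by
    ext y
    simp [LinearMap.mem_ker, sub_eq_zero]
  rw [hset]
  refine Measure.addHaar_submodule _ _ (fun h => ?_)
  set v : Pt d := EuclideanSpace.single (⟨0, hd⟩ : Fin d) (1:ℝ) with hv
  have hy : Function.update (0 : Fin m → Pt d) i v ∈
      LinearMap.ker ((LinearMap.proj i : (Fin m → Pt d) →ₗ[ℝ] Pt d) - LinearMap.proj j) :=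
    h ▸ Submodule.mem_top
  rw [LinearMap.mem_ker, LinearMap.sub_apply, LinearMap.proj_apply, LinearMap.proj_apply,
    Function.update_self, Function.update_of_ne (Ne.symm hij), Pi.zero_apply, sub_zero] at hy
  exact pt_ne_zero_of_one_le hd hy

lemma null_eq_const (d m : ℕ) (hd : 1 ≤ d) (i : Fin m) (p : Pt d) :
    volume {y : Fin m → Pt d | y i = p} = 0 := by
  haveI := haar_pi d m
  have h0 : volume {y : Fin m → Pt d | y i = 0} = 0 := by
    have hset : {y : Fin m → Pt d | y i = 0}
        = (LinearMap.ker (LinearMap.proj i : (Fin m → Pt d) →ₗ[ℝ] Pt d)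
            : Set (Fin m → Pt d)) := by
      ext y
      simp [LinearMap.mem_ker]
    rw [hset]
    refine Measure.addHaar_submodule _ _ (fun h => ?_)
    set v : Pt d := EuclideanSpace.single (⟨0, hd⟩ : Fin d) (1:ℝ) with hv
    have hy : Function.update (0 : Fin m → Pt d) i v ∈
        LinearMap.ker (LinearMap.proj i : (Fin m → Pt d) →ₗ[ℝ] Pt d) :=
      h ▸ Submodule.mem_top
    rw [LinearMap.mem_ker, LinearMap.proj_apply, Function.update_self] at hy
    exact pt_ne_zero_of_one_le hd hy
  have hset : {y : Fin m → Pt d | y i = p}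
      = (fun y => y + Function.update (0 : Fin m → Pt d) i (-p)) ⁻¹' {y | y i = 0} := by
    ext y
    simp only [Set.mem_preimage, Set.mem_setOf_eq, Pi.add_apply, Function.update_self]
    constructor
    · intro h; rw [h, add_neg_cancel]
    · intro h; exact sub_eq_zero.1 (by rwa [sub_eq_add_neg])
  rw [hset, measure_preimage_add_right]
  exact h0

lemma union_confOf_eq_image {d m : ℕ} (η : Finset (Pt d)) (y : Fin m → Pt d) :
    η ∪ confOf y
      = Finset.image (Sum.elim y (fun p : {x // x ∈ η} => (p : Pt d))) Finset.univ := by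
  ext x
  simp only [Finset.mem_union, confOf, Finset.mem_image, Finset.mem_univ, true_and]
  constructor
  · rintro (hx | ⟨i, hy⟩)
    · exact ⟨Sum.inr ⟨x, hx⟩, rfl⟩
    · exact ⟨Sum.inl i, hy⟩
  · rintro ⟨(i | p), rfl⟩
    · exact Or.inr ⟨i, rfl⟩
    · exact Or.inl p.2

lemma elim_injective {d m : ℕ} (η : Finset (Pt d)) (y : Fin m → Pt d)
    (h1 : ∀ i j : Fin m, i ≠ j → y i ≠ y j) (h2 : ∀ i : Fin m, ∀ x ∈ η, y i ≠ x) :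
    Function.Injective (Sum.elim y (fun p : {x // x ∈ η} => (p : Pt d))) := by
  rintro (i | p) (j | q) h
  · simp only [Sum.elim_inl] at h
    have : i = j := by
      by_contra hne
      exact h1 i j hne h
    rw [this]
  · simp only [Sum.elim_inl, Sum.elim_inr] at h
    exact absurd h (h2 i q q.2)
  · simp only [Sum.elim_inl, Sum.elim_inr] at h
    exact absurd h.symm (h2 j p p.2)
  · simp only [Sum.elim_inr] at h
    rw [Subtype.ext h]

lemma energy_image {d : ℕ} (φ : ℝ → ℝ) {ι : Type*} [Fintype ι] [DecidableEq ι] (f : ι → Pt d)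
    (hf : Function.Injective f) :
    energy d φ (Finset.image f Finset.univ) =
      (∑ p ∈ (Finset.univ : Finset ι).offDiag, phiE φ (dist (f p.1) (f p.2))) / 2 := by
  classical
  rw [energy]
  congr 1
  refine (Finset.sum_bij
    (fun (p : ι × ι) (_ : p ∈ (Finset.univ : Finset ι).offDiag) => (f p.1, f p.2))
    ?_ ?_ ?_ ?_).symm
  · intro p hp
    rw [Finset.mem_offDiag] at hp ⊢
    exact ⟨Finset.mem_image_of_mem f (Finset.mem_univ _),
      Finset.mem_image_of_mem f (Finset.mem_univ _), fun h => hp.2.2 (hf h)⟩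
  · intro p hp q hq h
    simp only [Prod.mk.injEq] at h
    exact Prod.ext (hf h.1) (hf h.2)
  · intro q hq
    rw [Finset.mem_offDiag] at hq
    obtain ⟨i, _, hi⟩ := Finset.mem_image.1 hq.1
    obtain ⟨j, _, hj⟩ := Finset.mem_image.1 hq.2.1
    refine ⟨(i, j), Finset.mem_offDiag.2 ⟨Finset.mem_univ _, Finset.mem_univ _, ?_⟩, ?_⟩
    · intro h
      apply hq.2.2
      rw [← hi, ← hj]
      simpa using congrArg f h
    · simp [hi, hj]
  · intro p hp
    rw [Finset.mem_offDiag] at hp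
    have hdist : 0 < dist (f p.1) (f p.2) := dist_pos.2 fun h => hp.2.2 (hf h)
    show phiE φ (dist (f p.1) (f p.2)) = φ (dist (f p.1) (f p.2))
    exact phiE_of_pos φ hdist

lemma chiM_image {d : ℕ} (a : ℝ) {ι : Type*} [Fintype ι] (f : ι → Pt d) :
    chiM d a (Finset.image f Finset.univ)
      = if (∀ i j : ι, cubeIdx d a (f i) = cubeIdx d a (f j) → f i = f j) then 1 else 0 := by
  have hiff : (∀ x ∈ Finset.image f Finset.univ, ∀ x' ∈ Finset.image f Finset.univ,
      cubeIdx d a x = cubeIdx d a x' → x = x')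
      ↔ (∀ i j : ι, cubeIdx d a (f i) = cubeIdx d a (f j) → f i = f j) := by
    constructor
    · intro h i j hc
      exact h _ (Finset.mem_image_of_mem f (Finset.mem_univ _)) _
        (Finset.mem_image_of_mem f (Finset.mem_univ _)) hc
    · intro h x hx x' hx' hc
      obtain ⟨i, _, rfl⟩ := Finset.mem_image.1 hx
      obtain ⟨j, _, rfl⟩ := Finset.mem_image.1 hx'
      exact h i j hc
  simp only [chiM, hiff]

lemma continuous_elim {d m : ℕ} (η : Finset (Pt d)) (i0 : Sum (Fin m) {x // x ∈ η}) :
    Continuous (fun y : Fin m → Pt d => Sum.elim y (fun p : {x // x ∈ η} => (p : Pt d)) i0) := by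
  cases i0 with
  | inl i => exact continuous_apply i
  | inr p => exact continuous_const

lemma measurableSet_cubeEq {d m : ℕ} (a : ℝ) (f g : (Fin m → Pt d) → Pt d)
    (hf : Continuous f) (hg : Continuous g) :
    MeasurableSet {y : Fin m → Pt d | cubeIdx d a (f y) = cubeIdx d a (g y)} := by
  have : {y : Fin m → Pt d | cubeIdx d a (f y) = cubeIdx d a (g y)}
      = ⋂ k : Fin d, {y | ⌊(f y) k / a + 1/2⌋ = ⌊(g y) k / a + 1/2⌋} := by
    ext y
    simp only [Set.mem_setOf_eq, Set.mem_iInter, funext_iff, cubeIdx]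
  rw [this]
  refine MeasurableSet.iInter fun k => measurableSet_eq_fun ?_ ?_
  · exact Int.measurable_floor.comp
      ((((PiLp.continuous_apply 2 _ k).comp hf).measurable.div_const a).add_const _)
  · exact Int.measurable_floor.comp
      ((((PiLp.continuous_apply 2 _ k).comp hg).measurable.div_const a).add_const _)

/-- The "good quasi-lattice" set is measurable. -/
lemma measurableSet_Q {d m : ℕ} (a : ℝ) (η : Finset (Pt d)) :
    MeasurableSet {y : Fin m → Pt d |
      ∀ i0 j0 : Sum (Fin m) {x // x ∈ η},
        cubeIdx d a (Sum.elim y (fun p : {x // x ∈ η} => (p : Pt d)) i0)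
          = cubeIdx d a (Sum.elim y (fun p : {x // x ∈ η} => (p : Pt d)) j0)
        → Sum.elim y (fun p : {x // x ∈ η} => (p : Pt d)) i0
          = Sum.elim y (fun p : {x // x ∈ η} => (p : Pt d)) j0} := by
  simp only [Set.setOf_forall]
  refine MeasurableSet.iInter fun i0 => MeasurableSet.iInter fun j0 => ?_
  have hone : {y : Fin m → Pt d |
      cubeIdx d a (Sum.elim y (fun p : {x // x ∈ η} => (p : Pt d)) i0)
        = cubeIdx d a (Sum.elim y (fun p : {x // x ∈ η} => (p : Pt d)) j0)
      → Sum.elim y (fun p : {x // x ∈ η} => (p : Pt d)) i0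
        = Sum.elim y (fun p : {x // x ∈ η} => (p : Pt d)) j0}
      = ({y : Fin m → Pt d |
          cubeIdx d a (Sum.elim y (fun p : {x // x ∈ η} => (p : Pt d)) i0)
            = cubeIdx d a (Sum.elim y (fun p : {x // x ∈ η} => (p : Pt d)) j0)}ᶜ
          ∪ {y : Fin m → Pt d |
              Sum.elim y (fun p : {x // x ∈ η} => (p : Pt d)) i0
                = Sum.elim y (fun p : {x // x ∈ η} => (p : Pt d)) j0}) := by
    ext y
    simp only [Set.mem_setOf_eq, Set.mem_union, Set.mem_compl_iff, Set.mem_setOf_eq]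
    exact imp_iff_not_or
  rw [hone]

  refine MeasurableSet.union ?_ ?_
  · exact (measurableSet_cubeEq a _ _ (continuous_elim η i0) (continuous_elim η j0)).compl
  · exact (isClosed_eq (continuous_elim η i0) (continuous_elim η j0)).measurableSet

/-- Stability: on a bounded region, under Assumption (A) with `s > d`, the energy of any
configuration is bounded below by `-B·|γ|`. -/
lemma stability (d : ℕ) (hd : 1 ≤ d) (φ : ℝ → ℝ) (r₀ R φ₀ φ₁ ε₀ s : ℝ)
    (hA : AssumptionA d φ r₀ R φ₀ φ₁ ε₀ s) (hs : (d:ℝ) < s)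
    (Λ : Set (Pt d)) (hΛb : Bornology.IsBounded Λ) :
    ∃ B : ℝ, 0 ≤ B ∧ ∀ γ : Finset (Pt d), ↑γ ⊆ Λ → -(B * γ.card) ≤ energy d φ γ := by
  classical
  obtain ⟨M₀, hM₀⟩ := hΛb.subset_closedBall 0
  set M : ℝ := max M₀ 1 with hMdef
  have hM1 : (1:ℝ) ≤ M := le_max_right _ _
  have hMpos : (0:ℝ) < M := lt_of_lt_of_le one_pos hM1
  have hnorm : ∀ x ∈ Λ, ‖x‖ ≤ M := by
    intro x hx
    have h := hM₀ hx
    rw [Metric.mem_closedBall, dist_zero_right] at h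
    exact h.trans (le_max_left _ _)
  have hcoord : ∀ x ∈ Λ, ∀ i : Fin d, |x i| ≤ M := by
    intro x hx i
    have h2 : ‖x i‖ ^ 2 ≤ ∑ j, ‖x j‖ ^ 2 :=
      Finset.single_le_sum (f := fun j => ‖x j‖ ^ 2) (fun j _ => sq_nonneg _) (Finset.mem_univ i)
    have h3 : |x i| ≤ ‖x‖ := by
      rw [EuclideanSpace.norm_eq]
      calc |x i| = ‖x i‖ := (Real.norm_eq_abs _).symm
        _ = Real.sqrt (‖x i‖ ^ 2) := (Real.sqrt_sq (norm_nonneg _)).symm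
        _ ≤ Real.sqrt (∑ j, ‖x j‖ ^ 2) := Real.sqrt_le_sqrt h2
    exact h3.trans (hnorm x hx)
  have hdistΛ : ∀ x ∈ Λ, ∀ y ∈ Λ, dist x y ≤ 2*M := by
    intro x hx y hy
    calc dist x y ≤ ‖x‖ + ‖y‖ := by rw [dist_eq_norm]; exact norm_sub_le x y
      _ ≤ 2*M := by have h1 := hnorm x hx; have h2 := hnorm y hy; linarith
  -- lower bound constant C for φ on (0, 2M]
  have hRc : Set.Icc r₀ (max r₀ (2*M)) ⊆ Set.Ioi (0:ℝ) :=
    fun t ht => lt_of_lt_of_le hA.r0_pos ht.1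
  obtain ⟨t₀, ht₀mem, ht₀max⟩ :=
    isCompact_Icc.exists_isMaxOn ⟨r₀, le_refl r₀, le_max_left _ _⟩ ((hA.cont.mono hRc).neg)
  set C : ℝ := max 0 (-φ t₀) with hCdef
  have hC0 : 0 ≤ C := le_max_left _ _
  have hCb : ∀ t : ℝ, 0 < t → t ≤ 2*M → -C ≤ φ t := by
    intro t ht h2
    rcases le_or_gt t r₀ with h | h
    · have hcore := hA.core t ht h
      have hp : (0:ℝ) < φ₀ / t ^ s := div_pos hA.phi0_pos (Real.rpow_pos_of_pos ht s)
      linarith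
    · have htm : t ∈ Set.Icc r₀ (max r₀ (2*M)) := ⟨h.le, le_max_of_le_right h2⟩
      have hm' : -φ t ≤ -φ t₀ := ht₀max htm
      have hC2 : -φ t₀ ≤ C := le_max_right _ _
      linarith
  have hs0 : (0:ℝ) ≤ s := le_trans (Nat.cast_nonneg d) hA.s_ge
  have hsd' : (0:ℝ) < s - d := by linarith
  set sd : ℝ := Real.sqrt d with hsddef
  have hsd1 : (1:ℝ) ≤ sd := by
    rw [hsddef, show (1:ℝ) = Real.sqrt 1 from (Real.sqrt_one).symm]
    exact Real.sqrt_le_sqrt (by exact_mod_cast hd)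
  have hsd0 : (0:ℝ) < sd := lt_of_lt_of_le one_pos hsd1
  have hden : (0:ℝ) < (C+1) * (2*M+7)^d * sd ^ s :=
    mul_pos (mul_pos (by linarith) (pow_pos (by linarith) d)) (Real.rpow_pos_of_pos hsd0 s)
  set τ : ℝ := φ₀ / ((C+1) * (2*M+7)^d * sd ^ s) with hτdef
  have hτpos : 0 < τ := div_pos hA.phi0_pos hden
  have htend : Tendsto (fun δ : ℝ => δ ^ (s - (d:ℝ))) (𝓝[>] 0) (𝓝 0) := by
    have hcont : ContinuousAt (fun x : ℝ => x ^ (s - (d:ℝ))) 0 :=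
      Real.continuousAt_rpow_const 0 _ (Or.inr hsd'.le)
    have h0 : (0:ℝ) ^ (s - (d:ℝ)) = 0 := Real.zero_rpow (ne_of_gt hsd')
    have h := hcont.tendsto
    rw [h0] at h
    exact h.mono_left nhdsWithin_le_nhds
  have hev1 : ∀ᶠ δ in 𝓝[>] (0:ℝ), δ ^ (s - (d:ℝ)) < τ := htend.eventually_lt_const hτpos
  have hev2 : ∀ᶠ δ in 𝓝[>] (0:ℝ), δ ∈ Set.Ioo 0 (min 1 (r₀ / sd)) :=
    Ioo_mem_nhdsGT (lt_min one_pos (div_pos hA.r0_pos hsd0))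
  obtain ⟨δ, hδτ, hδm⟩ := (hev1.and hev2).exists
  obtain ⟨hδ0, hδlt⟩ := hδm
  have hδ1 : δ ≤ 1 := le_of_lt (lt_of_lt_of_le hδlt (min_le_left _ _))
  have hδr : δ * sd ≤ r₀ := by
    have h := lt_of_lt_of_le hδlt (min_le_right _ _)
    rw [lt_div_iff₀ hsd0] at h
    exact h.le
  set A : ℝ := φ₀ / (δ * sd) ^ s with hAdef
  have hδsd0 : 0 < δ * sd := mul_pos hδ0 hsd0
  have hApos : 0 < A := div_pos hA.phi0_pos (Real.rpow_pos_of_pos hδsd0 s)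
  have hkey : (C+1) * ((2*M+7)^d / δ^d) ≤ A := by
    have hsplit : (δ * sd) ^ s = δ ^ (s - (d:ℝ)) * δ ^ d * sd ^ s := by
      rw [Real.mul_rpow hδ0.le hsd0.le]
      congr 1
      rw [← Real.rpow_natCast δ d, ← Real.rpow_add hδ0]
      congr 1
      ring
    have h1 : δ ^ (s - (d:ℝ)) * ((C+1) * (2*M+7)^d * sd ^ s) < φ₀ := by
      rw [← lt_div_iff₀ hden, ← hτdef]
      exact hδτ
    have h2 : (0:ℝ) < δ ^ d := pow_pos hδ0 d
    rw [hAdef, hsplit, ← mul_div_assoc, div_le_div_iff₀ h2 (by positivity)]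
    calc ((C+1)*(2*M+7)^d) * (δ ^ (s - (d:ℝ)) * δ^d * sd^s)
        = (δ ^ (s - (d:ℝ)) * ((C+1)*(2*M+7)^d*sd^s)) * δ^d := by ring
      _ ≤ φ₀ * δ^d := mul_le_mul_of_nonneg_right h1.le h2.le
  refine ⟨A/2, (half_pos hApos).le, ?_⟩
  intro γ hγΛ
  set idx : Pt d → (Fin d → ℤ) := cubeIdx d δ with hidx
  set T := γ.image idx with hT
  have hfib : γ.card = ∑ k ∈ T, (γ.filter fun x => idx x = k).card :=
    Finset.card_eq_sum_card_fiberwise (fun x hx => Finset.mem_image_of_mem idx hx)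
  have hsplitS : ∑ p ∈ γ.offDiag, φ (dist p.1 p.2)
      = (∑ p ∈ γ.offDiag.filter (fun p => idx p.1 = idx p.2), φ (dist p.1 p.2))
      + (∑ p ∈ γ.offDiag.filter (fun p => ¬ idx p.1 = idx p.2), φ (dist p.1 p.2)) :=
    (Finset.sum_filter_add_sum_filter_not _ _ _).symm
  have hsame_term : ∀ p ∈ γ.offDiag.filter (fun p => idx p.1 = idx p.2),
      A ≤ φ (dist p.1 p.2) := by
    intro p hp
    rw [Finset.mem_filter, Finset.mem_offDiag] at hp
    obtain ⟨⟨hp1, hp2, hpne⟩, hpc⟩ := hp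
    have hdpos : 0 < dist p.1 p.2 := dist_pos.2 hpne
    have hcoords : ∀ i : Fin d, |p.1 i - p.2 i| ≤ δ := by
      intro i
      have hfl : ⌊p.1 i / δ + 1/2⌋ = ⌊p.2 i / δ + 1/2⌋ := by
        have h := congrFun hpc i
        simpa [hidx, cubeIdx] using h
      have habs := abs_lt_one_of_floor_eq hfl
      have hr : p.1 i / δ + 1/2 - (p.2 i / δ + 1/2) = (p.1 i - p.2 i)/δ := by ring
      rw [hr, abs_div, abs_of_pos hδ0, div_lt_one hδ0] at habs
      exact habs.le
    have hdle : dist p.1 p.2 ≤ δ * sd := by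
      rw [EuclideanSpace.dist_eq]
      have hsum : ∑ i, dist (p.1 i) (p.2 i)^2 ≤ ∑ _i : Fin d, δ^2 := by
        refine Finset.sum_le_sum fun i _ => ?_
        rw [Real.dist_eq]
        have h0 : (0:ℝ) ≤ |p.1 i - p.2 i| := abs_nonneg _
        exact sq_le_sq' (by linarith) (hcoords i)
      refine le_trans (Real.sqrt_le_sqrt hsum) ?_
      rw [Finset.sum_const, Finset.card_univ, Fintype.card_fin, nsmul_eq_mul,
        Real.sqrt_mul (Nat.cast_nonneg d), Real.sqrt_sq hδ0.le, mul_comm, hsddef]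
    have hdr : dist p.1 p.2 ≤ r₀ := hdle.trans hδr
    have hcore := hA.core _ hdpos hdr
    have hrle : dist p.1 p.2 ^ s ≤ (δ * sd) ^ s :=
      Real.rpow_le_rpow dist_nonneg hdle hs0
    have hAle : A ≤ φ₀ / dist p.1 p.2 ^ s := by
      rw [hAdef]
      gcongr
      exact hA.phi0_pos.le
    linarith
  have hsame_sum : A * (((γ.offDiag.filter (fun p => idx p.1 = idx p.2)).card : ℝ))
      ≤ ∑ p ∈ γ.offDiag.filter (fun p => idx p.1 = idx p.2), φ (dist p.1 p.2) := by
    have h := Finset.card_nsmul_le_sum _ _ _ hsame_term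
    rwa [nsmul_eq_mul, mul_comm] at h
  have hdiff_term : ∀ p ∈ γ.offDiag.filter (fun p => ¬ idx p.1 = idx p.2),
      -C ≤ φ (dist p.1 p.2) := by
    intro p hp
    rw [Finset.mem_filter, Finset.mem_offDiag] at hp
    obtain ⟨⟨hp1, hp2, hpne⟩, _⟩ := hp
    exact hCb _ (dist_pos.2 hpne) (hdistΛ _ (hγΛ hp1) _ (hγΛ hp2))
  have hdiff_sum : (-C) * (((γ.offDiag.filter (fun p => ¬ idx p.1 = idx p.2)).card : ℝ))
      ≤ ∑ p ∈ γ.offDiag.filter (fun p => ¬ idx p.1 = idx p.2), φ (dist p.1 p.2) := by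
    have h := Finset.card_nsmul_le_sum _ _ _ hdiff_term
    rwa [nsmul_eq_mul, mul_comm] at h
  have hdiffcard : (((γ.offDiag.filter (fun p => ¬ idx p.1 = idx p.2)).card : ℝ))
      ≤ (γ.card : ℝ) * γ.card := by
    have h1 : (γ.offDiag.filter (fun p => ¬ idx p.1 = idx p.2)).card ≤ γ.offDiag.card :=
      Finset.card_filter_le _ _
    have h2 : γ.offDiag.card ≤ γ.card * γ.card := by
      rw [Finset.offDiag_card]
      exact Nat.sub_le _ _
    exact_mod_cast le_trans h1 h2
  have hdiff_sum' : -(C * ((γ.card:ℝ) * γ.card))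
      ≤ ∑ p ∈ γ.offDiag.filter (fun p => ¬ idx p.1 = idx p.2), φ (dist p.1 p.2) := by
    have h1 : C * (((γ.offDiag.filter (fun p => ¬ idx p.1 = idx p.2)).card : ℝ))
        ≤ C * ((γ.card:ℝ) * γ.card) := mul_le_mul_of_nonneg_left hdiffcard hC0
    have h2 := hdiff_sum
    linarith
  have hsamecard : (((γ.offDiag.filter (fun p => idx p.1 = idx p.2)).card : ℝ))
      = (∑ k ∈ T, ((γ.filter fun x => idx x = k).card : ℝ)^2) - γ.card := by
    have hbi : γ.offDiag.filter (fun p => idx p.1 = idx p.2)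
        = T.biUnion (fun k => (γ.filter fun x => idx x = k).offDiag) := by
      ext p
      simp only [Finset.mem_filter, Finset.mem_offDiag, Finset.mem_biUnion, hT,
        Finset.mem_image]
      constructor
      · rintro ⟨⟨h1, h2, h3⟩, h4⟩
        exact ⟨idx p.1, ⟨p.1, h1, rfl⟩, ⟨h1, rfl⟩, ⟨h2, h4.symm⟩, h3⟩
      · rintro ⟨k, _, ⟨h1, hk1⟩, ⟨h2, hk2⟩, h3⟩
        exact ⟨⟨h1, h2, h3⟩, by rw [hk1, hk2]⟩
    have hdisj : ∀ k ∈ T, ∀ l ∈ T, k ≠ l →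
        Disjoint ((γ.filter fun x => idx x = k).offDiag)
          ((γ.filter fun x => idx x = l).offDiag) := by
      intro k _ l _ hkl
      rw [Finset.disjoint_left]
      intro p hpk hpl
      have h1 := (Finset.mem_filter.1 (Finset.mem_offDiag.1 hpk).1).2
      have h2 := (Finset.mem_filter.1 (Finset.mem_offDiag.1 hpl).1).2
      exact hkl (by rw [← h1, ← h2])
    rw [hbi, Finset.card_biUnion hdisj]
    have hterm : ∀ k ∈ T, (((γ.filter fun x => idx x = k).offDiag.card) : ℝ)
        = ((γ.filter fun x => idx x = k).card : ℝ)^2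
          - ((γ.filter fun x => idx x = k).card : ℝ) := by
      intro k hk
      rw [Finset.offDiag_card]
      obtain ⟨x, hx, hxk⟩ := Finset.mem_image.1 (hT ▸ hk)
      have hk1 : 0 < (γ.filter fun x => idx x = k).card :=
        Finset.card_pos.2 ⟨x, Finset.mem_filter.2 ⟨hx, hxk⟩⟩
      have hle : (γ.filter fun x => idx x = k).card
          ≤ (γ.filter fun x => idx x = k).card * (γ.filter fun x => idx x = k).card :=
        Nat.le_mul_of_pos_left _ hk1
      push_cast [Nat.cast_sub hle]
      ring
    push_cast
    rw [Finset.sum_congr rfl hterm, Finset.sum_sub_distrib]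
    congr 1
    rw [hfib]
    push_cast
    rfl
  have hNsum : ((γ.card:ℝ)) = ∑ k ∈ T, ((γ.filter fun x => idx x = k).card : ℝ) := by
    rw [hfib]
    push_cast
    rfl
  have hCS : ((γ.card:ℝ))^2 ≤ (T.card : ℝ)
      * ∑ k ∈ T, ((γ.filter fun x => idx x = k).card : ℝ)^2 := by
    rw [hNsum]
    exact sq_sum_le_card_mul_sum_sq
  have hTle : (T.card : ℝ) ≤ (2*M+7)^d / δ^d := by
    set mI : ℤ := ⌈M / δ⌉ + 2 with hmI
    have hceil0 : (0:ℤ) ≤ ⌈M/δ⌉ := Int.ceil_nonneg (by positivity)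
    have hmI0 : (0:ℤ) ≤ mI := by omega
    have hTsub : T ⊆ Fintype.piFinset (fun _ : Fin d => Finset.Icc (-mI) mI) := by
      intro k hk
      obtain ⟨x, hx, hxk⟩ := Finset.mem_image.1 (hT ▸ hk)
      rw [Fintype.mem_piFinset]
      intro i
      rw [Finset.mem_Icc]
      have hxabs := abs_le.1 (hcoord x (hγΛ hx) i)
      have hki : k i = ⌊x i / δ + 1/2⌋ := by rw [← hxk]; rfl
      have hceilR : (M/δ : ℝ) ≤ (⌈M/δ⌉ : ℝ) := Int.le_ceil _
      constructor
      · rw [hki, Int.le_floor]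
        have h1 : -M / δ ≤ x i / δ := (div_le_div_iff_of_pos_right hδ0).2 hxabs.1
        push_cast [hmI]
        have h3 : (-M) / δ = -(M/δ) := neg_div _ _
        linarith [h1, h3]
      · rw [hki]
        have hu : x i / δ + 1/2 ≤ (mI : ℝ) := by
          have h1 : x i / δ ≤ M / δ := (div_le_div_iff_of_pos_right hδ0).2 hxabs.2
          push_cast [hmI]
          linarith
        calc ⌊x i / δ + 1/2⌋ ≤ ⌊(mI:ℝ)⌋ := Int.floor_le_floor hu
          _ = mI := Int.floor_intCast _
    have hTcard : T.card ≤ ((2*mI+1).toNat)^d := by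
      refine le_trans (Finset.card_le_card hTsub) ?_
      rw [Fintype.card_piFinset]
      apply le_of_eq
      have : (Finset.Icc (-mI) mI).card = (2*mI+1).toNat := by
        rw [Int.card_Icc]
        congr 1
        ring
      simp [this]
    have h2m : (((2*mI+1).toNat : ℕ) : ℝ) = 2*(mI:ℝ)+1 := by
      have h := Int.toNat_of_nonneg (show (0:ℤ) ≤ 2*mI+1 by omega)
      have h' : (((2*mI+1).toNat : ℤ) : ℝ) = ((2*mI+1 : ℤ) : ℝ) := by exact_mod_cast h
      push_cast at h' ⊢
      linarith
    have hmIR : (0:ℝ) ≤ (mI:ℝ) := by exact_mod_cast hmI0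
    have hmb : 2*(mI:ℝ)+1 ≤ (2*M+7)/δ := by
      have hceil : (⌈M/δ⌉ : ℝ) < M/δ + 1 := Int.ceil_lt_add_one _
      have h7 : (7:ℝ) ≤ 7/δ := by
        rw [le_div_iff₀ hδ0]
        linarith
      have hMδ : M/δ ≤ M/δ := le_refl _
      have hsplit7 : (2*M+7)/δ = 2*(M/δ) + 7/δ := by ring
      push_cast [hmI]
      rw [hsplit7]
      have hMd1 : (0:ℝ) < M/δ := div_pos hMpos hδ0
      linarith
    have hc : (T.card : ℝ) ≤ ((((2*mI+1).toNat : ℕ)) : ℝ)^d := by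
      exact_mod_cast hTcard
    rw [h2m] at hc
    refine le_trans hc ?_
    calc (2*(mI:ℝ)+1)^d ≤ ((2*M+7)/δ)^d := by
          apply pow_le_pow_left₀ (by linarith) hmb
      _ = (2*M+7)^d / δ^d := div_pow _ _ d
  -- assemble
  set Sq : ℝ := ∑ k ∈ T, ((γ.filter fun x => idx x = k).card : ℝ)^2 with hSqdef
  have hSq0 : 0 ≤ Sq := Finset.sum_nonneg fun k _ => sq_nonneg _
  have hCSq : C * ((γ.card:ℝ) * γ.card) ≤ A * Sq := by
    have h1 : (γ.card:ℝ) * γ.card ≤ (T.card:ℝ) * Sq := by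
      calc (γ.card:ℝ) * γ.card = ((γ.card:ℝ))^2 := (sq (γ.card:ℝ)).symm
        _ ≤ (T.card:ℝ) * Sq := hCS
    have h2 : C * ((γ.card:ℝ) * γ.card) ≤ C * ((T.card:ℝ) * Sq) :=
      mul_le_mul_of_nonneg_left h1 hC0
    have h4 : C * (T.card:ℝ) ≤ A := by
      have h5 : C * (T.card:ℝ) ≤ C * ((2*M+7)^d/δ^d) := mul_le_mul_of_nonneg_left hTle hC0
      have h6 : C * ((2*M+7)^d/δ^d) ≤ (C+1) * ((2*M+7)^d/δ^d) := by
        apply mul_le_mul_of_nonneg_right (by linarith)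
        positivity
      linarith
    have h7 : (C * (T.card:ℝ)) * Sq ≤ A * Sq := mul_le_mul_of_nonneg_right h4 hSq0
    have h8 : C * ((T.card:ℝ) * Sq) = (C * (T.card:ℝ)) * Sq := by ring
    linarith [h2, h7, h8]
  have hSig : -(A * (γ.card:ℝ)) ≤ ∑ p ∈ γ.offDiag, φ (dist p.1 p.2) := by
    rw [hsplitS]
    have e2 : A * (((γ.offDiag.filter (fun p => idx p.1 = idx p.2)).card : ℝ))
        = A * Sq - A * (γ.card:ℝ) := by
      rw [hsamecard, hSqdef]
      ring
    linarith [hsame_sum, hdiff_sum', hCSq, e2]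
  rw [energy]
  linarith [hSig]

end RemAux


set_option maxHeartbeats 1000000 in
/-- Lemma 4.1.  Under Assumption (A) with `s > d`, for fixed `z, β > 0`, bounded
measurable `Λ` and a finite configuration `η ⊂ Λ`, the remainder
`R^Λ(η;z,β,a) = (z^{|η|}/Z_Λ(z,β))·Σ_{n≥0}(z^n/n!)∫_{Λ^n} e^{-βU(η∪{y})}(1-χ₋^a(η∪{y})) dy`
tends to `0` as `a → 0⁺`. -/
theorem remainder_tends_to_zero (d : ℕ) (hd : 1 ≤ d) (φ : ℝ → ℝ)
    (r₀ R φ₀ φ₁ ε₀ s : ℝ) (hA : AssumptionA d φ r₀ R φ₀ φ₁ ε₀ s) (hs : (d : ℝ) < s)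
    (z β : ℝ) (hz : 0 < z) (hβ : 0 < β)
    (Λ : Set (Pt d)) (hΛb : Bornology.IsBounded Λ) (hΛm : MeasurableSet Λ)
    (η : Finset (Pt d)) (hη : ↑η ⊆ Λ) :
    Tendsto (fun a : ℝ =>
        z ^ η.card / ZΛ d φ z β Λ * corrInt d φ z β Λ η (fun γ => 1 - chiM d a γ))
      (𝓝[>] (0 : ℝ)) (𝓝 0) := by
  classical
  obtain ⟨B, hB0, hstab⟩ := RemAux.stability d hd φ r₀ R φ₀ φ₁ ε₀ s hA hs Λ hΛb
  have hΛvol : volume Λ < ⊤ := hΛb.measure_lt_top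
  set v : ℝ := (volume Λ).toReal with hv
  have hv0 : 0 ≤ v := ENNReal.toReal_nonneg
  -- first term
  have hT0 : Tendsto (fun a : ℝ => Real.exp (-β * energy d φ η) * (1 - chiM d a η))
      (𝓝[>] (0:ℝ)) (𝓝 0) := by
    have heq : (fun _ : ℝ => (0:ℝ))
        =ᶠ[𝓝[>] (0:ℝ)] (fun a : ℝ => Real.exp (-β * energy d φ η) * (1 - chiM d a η)) := by
      filter_upwards [RemAux.chiM_eventually_one d η] with a ha
      rw [ha]
      ring
    exact Tendsto.congr' heq tendsto_const_nhds
  -- set facts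
  have hSm : ∀ m : ℕ, MeasurableSet {y : Fin m → Pt d | ∀ i, y i ∈ Λ} := by
    intro m
    have hpi : {y : Fin m → Pt d | ∀ i, y i ∈ Λ} = Set.pi Set.univ (fun _ : Fin m => Λ) := by
      ext y
      simp [Set.mem_pi]
    rw [hpi]
    exact MeasurableSet.pi Set.countable_univ (fun i _ => hΛm)
  have hSv : ∀ m : ℕ, volume {y : Fin m → Pt d | ∀ i, y i ∈ Λ} = (volume Λ) ^ m := by
    intro m
    have hpi : {y : Fin m → Pt d | ∀ i, y i ∈ Λ} = Set.pi Set.univ (fun _ : Fin m => Λ) := by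
      ext y
      simp [Set.mem_pi]
    rw [hpi, volume_pi_pi]
    simp
  have hfin : ∀ m : ℕ, IsFiniteMeasure
      (volume.restrict {y : Fin m → Pt d | ∀ i, y i ∈ Λ}) := by
    intro m
    constructor
    rw [Measure.restrict_apply_univ, hSv]
    exact ENNReal.pow_lt_top hΛvol
  -- pointwise uniform bound
  have hpt : ∀ (m : ℕ) (a : ℝ) (y : Fin m → Pt d), (∀ i, y i ∈ Λ) →
      ‖Real.exp (-β * energy d φ (η ∪ confOf y)) * (1 - chiM d a (η ∪ confOf y))‖
        ≤ Real.exp (β * B * ((η.card : ℝ) + m)) := by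
    intro m a y hy
    have hsub : ↑(η ∪ confOf y) ⊆ Λ := by
      intro x hx
      rcases Finset.mem_union.1 hx with h | h
      · exact hη h
      · obtain ⟨i, _, rfl⟩ := Finset.mem_image.1 h
        exact hy i
    have hen := hstab _ hsub
    have hcard : (((η ∪ confOf y).card : ℕ) : ℝ) ≤ (η.card : ℝ) + m := by
      have h1 : (η ∪ confOf y).card ≤ η.card + (confOf y).card := Finset.card_union_le _ _
      have h2 : (confOf y).card ≤ m := le_trans Finset.card_image_le (by simp)
      exact_mod_cast le_trans h1 (Nat.add_le_add_left h2 _)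
    have hexp : Real.exp (-β * energy d φ (η ∪ confOf y))
        ≤ Real.exp (β * B * ((η.card : ℝ) + m)) := by
      apply Real.exp_le_exp.2
      have h3 : -β * energy d φ (η ∪ confOf y) ≤ β * (B * ((η ∪ confOf y).card : ℝ)) := by
        nlinarith [hen, hβ.le]
      have h4 : β * (B * ((η ∪ confOf y).card : ℝ)) ≤ β * B * ((η.card : ℝ) + m) := by
        have h6 := mul_le_mul_of_nonneg_left hcard (mul_nonneg hβ.le hB0)
        calc β * (B * ((η ∪ confOf y).card : ℝ))
            = (β * B) * ((η ∪ confOf y).card : ℝ) := by ring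
          _ ≤ (β * B) * ((η.card : ℝ) + m) := h6
          _ = β * B * ((η.card : ℝ) + m) := by ring
      linarith
    have hchi : |1 - chiM d a (η ∪ confOf y)| ≤ 1 := by
      rw [chiM]
      split_ifs <;> norm_num
    rw [Real.norm_eq_abs, abs_mul, abs_of_pos (Real.exp_pos _)]
    have h5 : Real.exp (-β * energy d φ (η ∪ confOf y)) * |1 - chiM d a (η ∪ confOf y)|
        ≤ Real.exp (-β * energy d φ (η ∪ confOf y)) * 1 :=
      mul_le_mul_of_nonneg_left hchi (Real.exp_pos _).le
    rw [mul_one] at h5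
    exact h5.trans hexp
  -- a.e.-measurability of the integrands
  have hmeas : ∀ (m : ℕ) (a : ℝ), AEStronglyMeasurable
      (fun y : Fin m → Pt d =>
        Real.exp (-β * energy d φ (η ∪ confOf y)) * (1 - chiM d a (η ∪ confOf y)))
      (volume.restrict {y : Fin m → Pt d | ∀ i, y i ∈ Λ}) := by
    intro m a
    set G : (Fin m → Pt d) → ℝ := fun y =>
      Real.exp (-β * ((∑ p ∈ (Finset.univ : Finset (Sum (Fin m) {x // x ∈ η})).offDiag,
        RemAux.phiE φ (dist (Sum.elim y (fun q : {x // x ∈ η} => (q : Pt d)) p.1)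
          (Sum.elim y (fun q : {x // x ∈ η} => (q : Pt d)) p.2))) / 2))
      * (1 - if y ∈ {y : Fin m → Pt d |
          ∀ i0 j0 : Sum (Fin m) {x // x ∈ η},
            cubeIdx d a (Sum.elim y (fun q : {x // x ∈ η} => (q : Pt d)) i0)
              = cubeIdx d a (Sum.elim y (fun q : {x // x ∈ η} => (q : Pt d)) j0)
            → Sum.elim y (fun q : {x // x ∈ η} => (q : Pt d)) i0
              = Sum.elim y (fun q : {x // x ∈ η} => (q : Pt d)) j0} then (1:ℝ) else 0)
      with hG
    have hGmeas : Measurable G := by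
      have hE : Measurable (fun y : Fin m → Pt d =>
          ∑ p ∈ (Finset.univ : Finset (Sum (Fin m) {x // x ∈ η})).offDiag,
            RemAux.phiE φ (dist (Sum.elim y (fun q : {x // x ∈ η} => (q : Pt d)) p.1)
              (Sum.elim y (fun q : {x // x ∈ η} => (q : Pt d)) p.2))) := by
        refine Finset.measurable_sum _ fun p _ => ?_
        exact (RemAux.measurable_phiE hA.cont).comp
          (((RemAux.continuous_elim η p.1).dist (RemAux.continuous_elim η p.2)).measurable)
      have hind : Measurable (fun y : Fin m → Pt d =>
          if y ∈ {y : Fin m → Pt d |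
            ∀ i0 j0 : Sum (Fin m) {x // x ∈ η},
              cubeIdx d a (Sum.elim y (fun q : {x // x ∈ η} => (q : Pt d)) i0)
                = cubeIdx d a (Sum.elim y (fun q : {x // x ∈ η} => (q : Pt d)) j0)
              → Sum.elim y (fun q : {x // x ∈ η} => (q : Pt d)) i0
                = Sum.elim y (fun q : {x // x ∈ η} => (q : Pt d)) j0} then (1:ℝ) else 0) :=
        Measurable.ite (RemAux.measurableSet_Q a η) measurable_const measurable_const
      exact (Real.measurable_exp.comp ((hE.div_const 2).const_mul (-β))).mul
        (measurable_const.sub hind)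
    have hFG : ∀ y : Fin m → Pt d,
        (∀ i j : Fin m, i ≠ j → y i ≠ y j) → (∀ i : Fin m, ∀ x ∈ η, y i ≠ x) →
        Real.exp (-β * energy d φ (η ∪ confOf y)) * (1 - chiM d a (η ∪ confOf y)) = G y := by
      intro y hy1 hy2
      have hinj := RemAux.elim_injective η y hy1 hy2
      rw [RemAux.union_confOf_eq_image η y, RemAux.energy_image φ _ hinj,
        RemAux.chiM_image a _, hG]
      rfl
    -- null set
    set NS : Set (Fin m → Pt d) :=
      (⋃ (i : Fin m), ⋃ (j : Fin m), ⋃ (_ : i ≠ j), {y : Fin m → Pt d | y i = y j})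
      ∪ (⋃ (i : Fin m), ⋃ (p : {x // x ∈ η}), {y : Fin m → Pt d | y i = ↑p}) with hNSdef
    have hNS : volume NS = 0 := by
      rw [hNSdef]
      apply measure_union_null
      · exact measure_iUnion_null fun i => measure_iUnion_null fun j =>
          measure_iUnion_null fun hij => RemAux.null_eq_coord d m hd i j hij
      · exact measure_iUnion_null fun i => measure_iUnion_null fun p =>
          RemAux.null_eq_const d m hd i ↑p
    have haevol : (fun y : Fin m → Pt d =>
        Real.exp (-β * energy d φ (η ∪ confOf y)) * (1 - chiM d a (η ∪ confOf y)))
        =ᶠ[MeasureTheory.ae volume] G := by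
      filter_upwards [MeasureTheory.compl_mem_ae_iff.2 hNS] with y hy
      rw [hNSdef] at hy
      simp only [Set.mem_compl_iff, Set.mem_union, Set.mem_iUnion, Set.mem_setOf_eq, not_or,
        not_exists] at hy
      refine hFG y (fun i j hij h => ?_) (fun i x hx h => ?_)
      · exact hy.1 i j hij h
      · exact hy.2 i ⟨x, hx⟩ h
    have haer : (fun y : Fin m → Pt d =>
        Real.exp (-β * energy d φ (η ∪ confOf y)) * (1 - chiM d a (η ∪ confOf y)))
        =ᶠ[MeasureTheory.ae (volume.restrict {y : Fin m → Pt d | ∀ i, y i ∈ Λ})] G :=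
      ae_restrict_of_ae haevol
    exact (hGmeas.aestronglyMeasurable).congr haer.symm
  -- per-n integral tends to 0
  have hInt : ∀ n : ℕ, Tendsto (fun a : ℝ =>
      ∫ y in {y : Fin (n+1) → Pt d | ∀ i, y i ∈ Λ},
        Real.exp (-β * energy d φ (η ∪ confOf y)) * (1 - chiM d a (η ∪ confOf y)))
      (𝓝[>] (0:ℝ)) (𝓝 0) := by
    intro n
    haveI := hfin (n+1)
    have h := MeasureTheory.tendsto_integral_filter_of_dominated_convergence
      (μ := volume.restrict {y : Fin (n+1) → Pt d | ∀ i, y i ∈ Λ})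
      (F := fun a (y : Fin (n+1) → Pt d) =>
        Real.exp (-β * energy d φ (η ∪ confOf y)) * (1 - chiM d a (η ∪ confOf y)))
      (f := fun _ => (0:ℝ))
      (bound := fun _ => Real.exp (β * B * ((η.card : ℝ) + (n+1))))
      (Filter.Eventually.of_forall fun a => hmeas (n+1) a)
      (Filter.Eventually.of_forall fun a => by
        filter_upwards [ae_restrict_mem (hSm (n+1))] with y hy
        have hb := hpt (n+1) a y hy
        push_cast at hb
        exact hb)
      (integrable_const _)
      (Filter.Eventually.of_forall fun y => by
        have heq : (fun _ : ℝ => (0:ℝ)) =ᶠ[𝓝[>] (0:ℝ)]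
            (fun a : ℝ => Real.exp (-β * energy d φ (η ∪ confOf y))
              * (1 - chiM d a (η ∪ confOf y))) := by
          filter_upwards [RemAux.chiM_eventually_one d (η ∪ confOf y)] with a ha
          rw [ha]
          ring
        exact Tendsto.congr' heq tendsto_const_nhds)
    simpa using h
  -- per-n integral bound
  have hIbound : ∀ (n : ℕ) (a : ℝ),
      ‖∫ y in {y : Fin (n+1) → Pt d | ∀ i, y i ∈ Λ},
        Real.exp (-β * energy d φ (η ∪ confOf y)) * (1 - chiM d a (η ∪ confOf y))‖
      ≤ Real.exp (β * B * ((η.card : ℝ) + (n+1))) * v ^ (n+1) := by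
    intro n a
    haveI := hfin (n+1)
    have h := MeasureTheory.norm_integral_le_of_norm_le_const
      (μ := volume.restrict {y : Fin (n+1) → Pt d | ∀ i, y i ∈ Λ})
      (f := fun y : Fin (n+1) → Pt d =>
        Real.exp (-β * energy d φ (η ∪ confOf y)) * (1 - chiM d a (η ∪ confOf y)))
      (C := Real.exp (β * B * ((η.card : ℝ) + (n+1))))
      (by
        filter_upwards [ae_restrict_mem (hSm (n+1))] with y hy
        have hb := hpt (n+1) a y hy
        push_cast at hb
        exact hb)
    refine le_trans h ?_
    rw [measureReal_def, Measure.restrict_apply_univ, hSv, ENNReal.toReal_pow, ← hv]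
  -- the series tends to 0
  have hsum : Tendsto (fun a : ℝ => ∑' n : ℕ, (z ^ (n + 1) / (n + 1).factorial) *
      ∫ y in {y : Fin (n + 1) → Pt d | ∀ i, y i ∈ Λ},
        Real.exp (-β * energy d φ (η ∪ confOf y)) * (1 - chiM d a (η ∪ confOf y)))
      (𝓝[>] (0:ℝ)) (𝓝 0) := by
    set x : ℝ := z * Real.exp (β * B) * v with hx
    have hbsum : Summable (fun n : ℕ =>
        Real.exp (β * B * (η.card : ℝ)) * (x ^ (n+1) / (n+1).factorial)) := by
      apply Summable.mul_left
      exact (summable_nat_add_iff 1).2 (Real.summable_pow_div_factorial x)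
    have h := tendsto_tsum_of_dominated_convergence
      (f := fun (a : ℝ) (n : ℕ) => (z ^ (n + 1) / ((n + 1).factorial : ℝ)) *
        ∫ y in {y : Fin (n + 1) → Pt d | ∀ i, y i ∈ Λ},
          Real.exp (-β * energy d φ (η ∪ confOf y)) * (1 - chiM d a (η ∪ confOf y)))
      (g := fun _ : ℕ => (0:ℝ))
      (bound := fun n : ℕ => Real.exp (β * B * (η.card : ℝ)) * (x ^ (n+1) / (n+1).factorial))
      hbsum
      (fun n => by simpa using (hInt n).const_mul (z ^ (n + 1) / ((n + 1).factorial : ℝ)))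
      (Filter.Eventually.of_forall fun a => ?_)
    · rw [tsum_zero] at h
      exact h
    · intro n
      have hcpos : (0:ℝ) < z ^ (n + 1) / ((n + 1).factorial : ℝ) := by positivity
      rw [norm_mul, Real.norm_eq_abs, Real.norm_eq_abs, abs_of_pos hcpos]
      have h1 := hIbound n a
      rw [Real.norm_eq_abs] at h1
      have h2 : (z ^ (n + 1) / ((n + 1).factorial : ℝ)) *
          |∫ y in {y : Fin (n + 1) → Pt d | ∀ i, y i ∈ Λ},
            Real.exp (-β * energy d φ (η ∪ confOf y)) * (1 - chiM d a (η ∪ confOf y))|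
          ≤ (z ^ (n + 1) / ((n + 1).factorial : ℝ)) *
            (Real.exp (β * B * ((η.card : ℝ) + (n+1))) * v ^ (n+1)) :=
        mul_le_mul_of_nonneg_left h1 hcpos.le
      refine le_trans h2 (le_of_eq ?_)
      have he : Real.exp (β * B * ((η.card : ℝ) + (n+1)))
          = Real.exp (β * B * (η.card : ℝ)) * Real.exp (β * B) ^ (n+1) := by
        rw [← Real.exp_nat_mul, ← Real.exp_add]
        congr 1
        push_cast
        ring
      rw [he]
      rw [hx]
      ring
  -- assemble
  have hcorr : Tendsto (fun a : ℝ => corrInt d φ z β Λ η (fun γ => 1 - chiM d a γ))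
      (𝓝[>] (0:ℝ)) (𝓝 0) := by
    simp only [corrInt]
    have h := hT0.add hsum
    simpa using h
  have h := hcorr.const_mul (z ^ η.card / ZΛ d φ z β Λ)
  simpa using h
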